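/- Let ε_max > 0, let v₋₁, v₀ ∈ ℝ⁴, and let w : (0, ε_max) → ℝ⁴ be bounded. Suppose that for every ε ∈ (0, ε_max) the vector V(ε) = ε⁻¹ v₋₁ + v₀ + ε w(ε) satisfies η(V(ε), V(ε)) = -1. Then the family V is ultra-relativistic (i.e. for every time-like Z ∈ ℝ⁴, |η(V(ε), Z)| → ∞ as ε → 0⁺; note ‖V(ε)‖ = 1) if and only if v₋₁ ≠ 0. -/

import Mathlib

open Filter Topology

/-- The Minkowski bilinear form on ℝ⁴. -/
noncomputable def eta (x y : Fin 4 → ℝ) : ℝ :=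
  -(x 0 * y 0) + x 1 * y 1 + x 2 * y 2 + x 3 * y 3

lemma eta_bound (x y : Fin 4 → ℝ) : |eta x y| ≤ 4 * ‖x‖ * ‖y‖ := by
  have t : ∀ i : Fin 4, |x i * y i| ≤ ‖x‖ * ‖y‖ := fun i => by
    rw [abs_mul]
    exact mul_le_mul (norm_le_pi_norm x i) (norm_le_pi_norm y i) (abs_nonneg _) (norm_nonneg _)
  have t0 := abs_le.mp (t 0); have t1 := abs_le.mp (t 1)
  have t2 := abs_le.mp (t 2); have t3 := abs_le.mp (t 3)
  rw [eta, abs_le]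
  constructor <;> nlinarith [t0.1, t1.1, t2.1, t3.1, t0.2, t1.2, t2.2, t3.2]

lemma eq_zero_of_abs_le_mul (A c ε₀ : ℝ) (hε₀ : 0 < ε₀)
    (h : ∀ ε, 0 < ε → ε < ε₀ → |A| ≤ c * ε) : A = 0 := by
  by_contra hA
  have habs : 0 < |A| := abs_pos.2 hA
  have hc : 0 < c := by
    have := h (ε₀/2) (by linarith) (by linarith)
    nlinarith
  have hεpos : 0 < min (ε₀/2) (|A|/(2*c)) := by positivity
  have := h _ hεpos (lt_of_le_of_lt (min_le_left _ _) (by linarith))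
  have h2 : c * min (ε₀/2) (|A|/(2*c)) ≤ c * (|A|/(2*c)) :=
    mul_le_mul_of_nonneg_left (min_le_right _ _) hc.le
  have h3 : c * (|A|/(2*c)) = |A|/2 := by field_simp
  linarith

lemma eta_ne_zero_of_null (a Z : Fin 4 → ℝ) (hnull : eta a a = 0) (ha : a ≠ 0)
    (hZ : eta Z Z < 0) : eta a Z ≠ 0 := by
  intro h
  rw [eta] at hnull hZ h
  by_cases ha0 : a 0 = 0
  · have h1 : a 1 = 0 := by nlinarith [sq_nonneg (a 1), sq_nonneg (a 2), sq_nonneg (a 3)]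
    have h2 : a 2 = 0 := by nlinarith [sq_nonneg (a 1), sq_nonneg (a 2), sq_nonneg (a 3)]
    have h3 : a 3 = 0 := by nlinarith [sq_nonneg (a 1), sq_nonneg (a 2), sq_nonneg (a 3)]
    exact ha (funext fun i => by fin_cases i <;> assumption)
  · have ha0sq : 0 < a 0 ^ 2 := by positivity
    have hCS : (a 1 * Z 1 + a 2 * Z 2 + a 3 * Z 3)^2 ≤
        (a 1^2 + a 2^2 + a 3^2) * (Z 1^2 + Z 2^2 + Z 3^2) := by
      nlinarith [sq_nonneg (a 1 * Z 2 - a 2 * Z 1), sq_nonneg (a 1 * Z 3 - a 3 * Z 1),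
        sq_nonneg (a 2 * Z 3 - a 3 * Z 2)]
    have hs : a 0 * Z 0 = a 1 * Z 1 + a 2 * Z 2 + a 3 * Z 3 := by linarith
    have hn2 : a 1^2 + a 2^2 + a 3^2 = a 0^2 := by nlinarith
    have h1 : (a 0 * Z 0)^2 ≤ a 0^2 * (Z 1^2 + Z 2^2 + Z 3^2) := by
      rw [hs, ← hn2]; exact hCS
    have h2 : a 0^2 * (Z 1^2 + Z 2^2 + Z 3^2) < a 0^2 * (Z 0^2) := by
      apply mul_lt_mul_of_pos_left _ ha0sq; nlinarith
    have h3 : (a 0 * Z 0)^2 = a 0^2 * Z 0^2 := by ring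
    linarith

lemma eta_expand (ε : ℝ) (vm1 v0 u Z : Fin 4 → ℝ) :
    eta (ε⁻¹ • vm1 + v0 + ε • u) Z = ε⁻¹ * eta vm1 Z + eta v0 Z + ε * eta u Z := by
  simp only [eta, Pi.add_apply, Pi.smul_apply, smul_eq_mul]; ring

lemma key_identity (ε : ℝ) (hε : ε ≠ 0) (vm1 v0 u : Fin 4 → ℝ)
    (h : eta (ε⁻¹ • vm1 + v0 + ε • u) (ε⁻¹ • vm1 + v0 + ε • u) = -1) :
    eta vm1 vm1 + ε * (2 * eta vm1 v0) +
      ε^2 * (eta v0 v0 + 2 * eta vm1 u + 2 * ε * eta v0 u + ε^2 * eta u u + 1) = 0 := by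
  simp only [eta, Pi.add_apply, Pi.smul_apply, smul_eq_mul] at h ⊢
  field_simp at h
  have h6 : ε^6 * (-(vm1 0 * vm1 0) + vm1 1 * vm1 1 + vm1 2 * vm1 2 + vm1 3 * vm1 3 +
      ε * (2 * (-(vm1 0 * v0 0) + vm1 1 * v0 1 + vm1 2 * v0 2 + vm1 3 * v0 3)) +
      ε^2 * (-(v0 0 * v0 0) + v0 1 * v0 1 + v0 2 * v0 2 + v0 3 * v0 3 +
        2 * (-(vm1 0 * u 0) + vm1 1 * u 1 + vm1 2 * u 2 + vm1 3 * u 3) +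
        2 * ε * (-(v0 0 * u 0) + v0 1 * u 1 + v0 2 * u 2 + v0 3 * u 3) +
        ε^2 * (-(u 0 * u 0) + u 1 * u 1 + u 2 * u 2 + u 3 * u 3) + 1)) = 0 := by
    linear_combination ε^6 * h
  have := (mul_eq_zero.mp h6).resolve_left (pow_ne_zero 6 hε)
  linarith

set_option maxHeartbeats 1600000 in
/-- A normalised family `V(ε) = ε⁻¹ v₋₁ + v₀ + ε w(ε)` (with `w` bounded and
`η(V(ε),V(ε)) = -1`) is ultra-relativistic if and only if `v₋₁ ≠ 0`. -/
theorem perturbed_velocity_ultra_relativistic_iff_leading_nonzero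
    (εmax : ℝ) (hεmax : 0 < εmax) (vm1 v0 : Fin 4 → ℝ) (w : ℝ → Fin 4 → ℝ)
    (hbdd : ∃ C : ℝ, ∀ ε ∈ Set.Ioo (0:ℝ) εmax, ‖w ε‖ ≤ C)
    (hnorm : ∀ ε ∈ Set.Ioo (0:ℝ) εmax,
      eta (ε⁻¹ • vm1 + v0 + ε • w ε) (ε⁻¹ • vm1 + v0 + ε • w ε) = -1) :
    (∀ Z : Fin 4 → ℝ, eta Z Z < 0 →
        Tendsto (fun ε => |eta (ε⁻¹ • vm1 + v0 + ε • w ε) Z|) (𝓝[>] (0:ℝ)) atTop)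
      ↔ vm1 ≠ 0 := by
  obtain ⟨C, hC⟩ := hbdd
  set C' : ℝ := max C 0 with hC'def
  have hC'nonneg : 0 ≤ C' := le_max_right _ _
  have hC' : ∀ ε ∈ Set.Ioo (0:ℝ) εmax, ‖w ε‖ ≤ C' :=
    fun ε hε => (hC ε hε).trans (le_max_left _ _)
  -- the constant bounding the remainder term
  set K : ℝ := |eta v0 v0| + 8 * ‖vm1‖ * C' + 8 * εmax * ‖v0‖ * C' + 4 * εmax^2 * C'^2 + 1
    with hKdef
  have hKnonneg : 0 ≤ K := by positivity
  -- remainder bound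
  have hR : ∀ ε ∈ Set.Ioo (0:ℝ) εmax,
      |eta v0 v0 + 2 * eta vm1 (w ε) + 2 * ε * eta v0 (w ε) + ε^2 * eta (w ε) (w ε) + 1|
        ≤ K := by
    intro ε hε
    have hw := hC' ε hε
    have hwnn : (0:ℝ) ≤ ‖w ε‖ := norm_nonneg _
    have hεpos : 0 < ε := hε.1
    have hεlt : ε < εmax := hε.2
    have e1 : |eta vm1 (w ε)| ≤ 4 * ‖vm1‖ * C' := by
      refine (eta_bound vm1 (w ε)).trans ?_
      have := mul_le_mul_of_nonneg_left hw (by positivity : (0:ℝ) ≤ 4 * ‖vm1‖)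
      linarith [mul_assoc (4:ℝ) ‖vm1‖ ‖w ε‖]
    have e2 : |eta v0 (w ε)| ≤ 4 * ‖v0‖ * C' := by
      refine (eta_bound v0 (w ε)).trans ?_
      have := mul_le_mul_of_nonneg_left hw (by positivity : (0:ℝ) ≤ 4 * ‖v0‖)
      linarith [mul_assoc (4:ℝ) ‖v0‖ ‖w ε‖]
    have e3 : |eta (w ε) (w ε)| ≤ 4 * C'^2 := by
      refine (eta_bound (w ε) (w ε)).trans ?_
      nlinarith
    have q2 : |ε * eta v0 (w ε)| ≤ εmax * (4 * ‖v0‖ * C') := by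
      rw [abs_mul, abs_of_pos hεpos]
      exact mul_le_mul hεlt.le e2 (abs_nonneg _) hεmax.le
    have q3 : |ε^2 * eta (w ε) (w ε)| ≤ εmax^2 * (4 * C'^2) := by
      rw [abs_mul, abs_of_nonneg (sq_nonneg ε)]
      exact mul_le_mul (pow_le_pow_left₀ hεpos.le hεlt.le 2) e3 (abs_nonneg _) (by positivity)
    have a1 := abs_le.mp e1
    have a2 := abs_le.mp q2
    have a3 := abs_le.mp q3
    have a0 := abs_le.mp (le_refl |eta v0 v0|)
    rw [hKdef, abs_le]
    constructor <;> nlinarith [a1.1, a1.2, a2.1, a2.2, a3.1, a3.2, a0.1, a0.2]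
  -- eta vm1 vm1 = 0
  have hA : eta vm1 vm1 = 0 := by
    apply eq_zero_of_abs_le_mul _ (2 * |eta vm1 v0| + K * εmax) εmax hεmax
    intro ε hε0 hεlt
    have hkey := key_identity ε (ne_of_gt hε0) vm1 v0 (w ε) (hnorm ε ⟨hε0, hεlt⟩)
    set R : ℝ := eta v0 v0 + 2 * eta vm1 (w ε) + 2 * ε * eta v0 (w ε)
      + ε^2 * eta (w ε) (w ε) + 1 with hRdef
    have hRε : |R| ≤ K := hR ε ⟨hε0, hεlt⟩
    have hA' : eta vm1 vm1 = -(ε * (2 * eta vm1 v0) + ε^2 * R) := by linarith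
    rw [hA', abs_neg]
    calc |ε * (2 * eta vm1 v0) + ε^2 * R| ≤ |ε * (2 * eta vm1 v0)| + |ε^2 * R| := abs_add_le _ _
      _ = ε * (2 * |eta vm1 v0|) + ε^2 * |R| := by
          rw [abs_mul, abs_mul, abs_mul, abs_of_pos hε0, abs_of_nonneg (sq_nonneg ε)]
          norm_num
      _ ≤ ε * (2 * |eta vm1 v0|) + ε * (εmax * K) := by
          have h1 : ε^2 * |R| ≤ ε^2 * K := mul_le_mul_of_nonneg_left hRε (sq_nonneg ε)
          have h2 : ε^2 * K ≤ ε * (εmax * K) := by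
            have h3 : ε * ε ≤ ε * εmax := mul_le_mul_of_nonneg_left hεlt.le hε0.le
            nlinarith [mul_nonneg (sub_nonneg.mpr h3) hKnonneg]
          linarith
      _ = (2 * |eta vm1 v0| + K * εmax) * ε := by ring
  constructor
  · -- ultra-relativistic → vm1 ≠ 0
    intro hUR hvm1
    -- take the timelike vector Z = (1,0,0,0)
    set Z : Fin 4 → ℝ := ![1, 0, 0, 0] with hZdef
    have hZ : eta Z Z < 0 := by
      have e2 : (![1, 0, 0, 0] : Fin 4 → ℝ) 2 = 0 := rfl
      have e3 : (![1, 0, 0, 0] : Fin 4 → ℝ) 3 = 0 := rfl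
      norm_num [eta, hZdef, e2, e3]
    have hT := hUR Z hZ
    set M : ℝ := |eta v0 Z| + εmax * (4 * C' * ‖Z‖) with hMdef
    have hMnonneg : 0 ≤ M := by positivity
    have hEv : ∀ᶠ ε in 𝓝[>] (0:ℝ), (M + 1 : ℝ) ≤
        |eta (ε⁻¹ • vm1 + v0 + ε • w ε) Z| := hT.eventually (eventually_ge_atTop (M+1))
    have hIoo : ∀ᶠ ε in 𝓝[>] (0:ℝ), ε ∈ Set.Ioo (0:ℝ) εmax :=
      Ioo_mem_nhdsGT_of_mem ⟨le_rfl, hεmax⟩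
    obtain ⟨ε, h1, h2⟩ := (hEv.and hIoo).exists
    have hexp := eta_expand ε vm1 v0 (w ε) Z
    have hz : eta vm1 Z = 0 := by rw [hvm1]; simp [eta]
    have hwb := hC' ε h2
    have hwZ : |eta (w ε) Z| ≤ 4 * C' * ‖Z‖ := by
      refine (eta_bound (w ε) Z).trans ?_
      have h4 := mul_le_mul_of_nonneg_right
        (mul_le_mul_of_nonneg_left hwb (by norm_num : (0:ℝ) ≤ 4)) (norm_nonneg Z)
      linarith
    have h5 : ε * |eta (w ε) Z| ≤ εmax * (4 * C' * ‖Z‖) :=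
      mul_le_mul h2.2.le hwZ (abs_nonneg _) hεmax.le
    have h6 : |eta (ε⁻¹ • vm1 + v0 + ε • w ε) Z| ≤ M := by
      rw [hexp, hz, mul_zero, zero_add]
      refine (abs_add_le _ _).trans ?_
      rw [hMdef, abs_mul, abs_of_pos h2.1]
      linarith
    linarith
  · -- vm1 ≠ 0 → ultra-relativistic
    intro hvm1 Z hZ
    have ha : eta vm1 Z ≠ 0 := eta_ne_zero_of_null vm1 Z hA hvm1 hZ
    have hapos : 0 < |eta vm1 Z| := abs_pos.2 ha
    set M : ℝ := |eta v0 Z| + εmax * (4 * C' * ‖Z‖) with hMdef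
    have hMnonneg : 0 ≤ M := by positivity
    rw [tendsto_atTop]
    intro b
    have hPpos : 0 < |b| + M + 1 := by positivity
    set δ : ℝ := min εmax (|eta vm1 Z| / (|b| + M + 1)) with hδdef
    have hδpos : 0 < δ := lt_min hεmax (by positivity)
    filter_upwards [Ioo_mem_nhdsGT_of_mem (Set.mem_Ico.mpr ⟨le_rfl, hδpos⟩)] with ε hε
    have hεpos : 0 < ε := hε.1
    have hεmax' : ε < εmax := lt_of_lt_of_le hε.2 (min_le_left _ _)
    have hεδ : ε < |eta vm1 Z| / (|b| + M + 1) := lt_of_lt_of_le hε.2 (min_le_right _ _)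
    have hmul : ε * (|b| + M + 1) < |eta vm1 Z| := (lt_div_iff₀ hPpos).mp hεδ
    have hinv : |b| + M + 1 < ε⁻¹ * |eta vm1 Z| := by
      rw [← div_eq_inv_mul]
      exact (lt_div_iff₀ hεpos).mpr (by linarith [mul_comm ε (|b| + M + 1)])
    have hexp := eta_expand ε vm1 v0 (w ε) Z
    have hwZ : |eta (w ε) Z| ≤ 4 * C' * ‖Z‖ := by
      refine (eta_bound (w ε) Z).trans ?_
      have h4 := mul_le_mul_of_nonneg_right
        (mul_le_mul_of_nonneg_left (hC' ε ⟨hεpos, hεmax'⟩) (by norm_num : (0:ℝ) ≤ 4))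
        (norm_nonneg Z)
      linarith
    have h5 : ε * |eta (w ε) Z| ≤ εmax * (4 * C' * ‖Z‖) :=
      mul_le_mul hεmax'.le hwZ (abs_nonneg _) hεmax.le
    have hg : |eta v0 Z + ε * eta (w ε) Z| ≤ M := by
      refine (abs_add_le _ _).trans ?_
      rw [hMdef, abs_mul, abs_of_pos hεpos]
      linarith
    have htri : |ε⁻¹ * eta vm1 Z| ≤
        |ε⁻¹ * eta vm1 Z + (eta v0 Z + ε * eta (w ε) Z)| + |eta v0 Z + ε * eta (w ε) Z| := by
      have h7 := abs_add_le (ε⁻¹ * eta vm1 Z + (eta v0 Z + ε * eta (w ε) Z))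
        (-(eta v0 Z + ε * eta (w ε) Z))
      simpa only [add_neg_cancel_right, abs_neg] using h7
    have hia : |ε⁻¹ * eta vm1 Z| = ε⁻¹ * |eta vm1 Z| := by
      rw [abs_mul, abs_of_pos (inv_pos.mpr hεpos)]
    have habs : b ≤ |ε⁻¹ * eta vm1 Z + (eta v0 Z + ε * eta (w ε) Z)| := by
      rw [hia] at htri
      have hble : b ≤ |b| := le_abs_self b
      linarith
    rw [hexp, add_assoc]
    exact habs
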